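/- Let x = μ_j + z where z ~ N(0, σ²I_d) is a spherical Gaussian in ℝ^d, and let ν_i, ν_j ∈ ℝ^d be estimates with ‖ν_i − μ_i‖ ≤ Cσ/10 and ‖ν_j − μ_j‖ ≤ Cσ/10, where ‖μ_i − μ_j‖ = C_{ij}σ and C_{ij} ≥ C. Then P[‖x − ν_i‖ ≤ ‖x − ν_j‖] ≤ exp(−Ω(C_{ij}²)). -/

import Mathlib

set_option maxHeartbeats 1000000

open MeasureTheory ProbabilityTheory Real
open scoped NNReal RealInnerProductSpace

lemma gaussian_tail (v : ℝ≥0) (hv : v ≠ 0) (c : ℝ) (hc : c ≤ 0) :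
    (gaussianReal 0 v (Set.Iic c)).toReal ≤ Real.exp (-c^2 / (2 * v)) := by
  rw [gaussianReal_apply_eq_integral 0 hv, ENNReal.toReal_ofReal
    (setIntegral_nonneg measurableSet_Iic fun x _ => gaussianPDFReal_nonneg _ _ _)]
  have hv0 : (0:ℝ) < v := lt_of_le_of_ne v.coe_nonneg (by exact_mod_cast hv.symm)
  have key : ∀ x ∈ Set.Iic c, gaussianPDFReal 0 v x
      ≤ Real.exp (-c^2 / (2 * v)) * gaussianPDFReal c v x := by
    intro x hx
    simp only [Set.mem_Iic] at hx
    unfold gaussianPDFReal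
    rw [mul_comm (Real.exp (-c^2 / (2 * v))), mul_assoc (√(2 * π * (v:ℝ)))⁻¹, ← Real.exp_add]
    gcongr
    rw [← add_div, div_le_div_iff_of_pos_right (by positivity : (0:ℝ) < 2*(v:ℝ))]
    nlinarith [mul_nonneg (neg_nonneg.2 hc) (sub_nonneg.2 hx)]
  calc ∫ x in Set.Iic c, gaussianPDFReal 0 v x
      ≤ ∫ x in Set.Iic c, Real.exp (-c^2 / (2 * v)) * gaussianPDFReal c v x := by
        refine setIntegral_mono_on ((integrable_gaussianPDFReal 0 v).restrict)
          (((integrable_gaussianPDFReal c v).const_mul _).restrict) measurableSet_Iic key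
    _ = Real.exp (-c^2 / (2 * v)) * ∫ x in Set.Iic c, gaussianPDFReal c v x := by
        rw [integral_const_mul]
    _ ≤ Real.exp (-c^2 / (2 * v)) * 1 := by
        gcongr
        rw [← integral_gaussianPDFReal_eq_one c hv]
        exact setIntegral_le_integral (integrable_gaussianPDFReal c v)
          (ae_of_all _ fun x => gaussianPDFReal_nonneg _ _ _)
    _ = _ := mul_one _

/-- `z` is a centered spherical Gaussian vector with per-coordinate variance `σ²`:
every one-dimensional projection `⟪v, z⟫` is Gaussian with variance `σ² ‖v‖²`. -/
def IsSphericalGaussian {Ω : Type*} [MeasurableSpace Ω] (P : Measure Ω) {d : ℕ}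
    (z : Ω → EuclideanSpace ℝ (Fin d)) (σ : ℝ) : Prop :=
  ∀ v : EuclideanSpace ℝ (Fin d),
    Measure.map (fun ω => ⟪v, z ω⟫) P = gaussianReal 0 (Real.toNNReal (σ^2 * ‖v‖^2))

theorem stmt_6 :
    ∃ c₀ : ℝ, 0 < c₀ ∧
      ∀ (d : ℕ) (Ω : Type) (_ : MeasurableSpace Ω) (P : Measure Ω)
        (_ : IsProbabilityMeasure P) (z : Ω → EuclideanSpace ℝ (Fin d))
        (σ C Cij : ℝ) (μi μj νi νj : EuclideanSpace ℝ (Fin d)),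
        0 < σ → 0 < C → C ≤ Cij →
        IsSphericalGaussian P z σ →
        ‖μi - μj‖ = Cij * σ →
        ‖νi - μi‖ ≤ C * σ / 10 → ‖νj - μj‖ ≤ C * σ / 10 →
        (P {ω | ‖(μj + z ω) - νi‖ ≤ ‖(μj + z ω) - νj‖}).toReal ≤
          Real.exp (-c₀ * Cij^2) := by
  refine ⟨1/18, by norm_num, ?_⟩
  intro d Ω _ P _ z σ C Cij μi μj νi νj hσ hC hCC hz hd hνi hνj
  set w : EuclideanSpace ℝ (Fin d) := νj - νi with hw
  set c : ℝ := (‖νj‖^2 - ‖νi‖^2)/2 - ⟪w, μj⟫ with hcdef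
  have hCij : 0 < Cij := lt_of_lt_of_le hC hCC
  -- basic norm bounds
  have hμν : ‖μj - νj‖ ≤ C * σ / 10 := by rwa [norm_sub_rev]
  have hμνi : ‖μi - νi‖ ≤ C * σ / 10 := by rwa [norm_sub_rev]
  have htri1 : ‖μj - νi‖ ≥ Cij * σ - C * σ / 10 := by
    have h1 : ‖μi - μj‖ ≤ ‖μi - νi‖ + ‖νi - μj‖ := by
      simpa using norm_sub_le_norm_sub_add_norm_sub μi νi μj
    rw [norm_sub_rev νi μj] at h1
    linarith [hd ▸ h1]
  have hw_ub : ‖w‖ ≤ Cij * σ + 2 * (C * σ / 10) := by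
    have h1 : ‖νj - νi‖ ≤ ‖νj - μj‖ + ‖μj - νi‖ := norm_sub_le_norm_sub_add_norm_sub νj μj νi
    have h2 : ‖μj - νi‖ ≤ ‖μj - μi‖ + ‖μi - νi‖ := norm_sub_le_norm_sub_add_norm_sub μj μi νi
    rw [norm_sub_rev μj μi, hd] at h2
    linarith
  have hw_lb : (4/5 : ℝ) * (Cij * σ) ≤ ‖w‖ := by
    have h1 : ‖μj - μi‖ ≤ ‖μj - νj‖ + ‖νj - μi‖ := norm_sub_le_norm_sub_add_norm_sub μj νj μi
    have h2 : ‖νj - μi‖ ≤ ‖νj - νi‖ + ‖νi - μi‖ := norm_sub_le_norm_sub_add_norm_sub νj νi μi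
    rw [norm_sub_rev μj μi, hd] at h1
    have hCs : C * σ ≤ Cij * σ := by nlinarith
    have : Cij * σ ≤ ‖w‖ + 2 * (C * σ / 10) := by simp only [hw]; linarith
    linarith
  have hw_pos : 0 < ‖w‖ := lt_of_lt_of_le (by positivity) hw_lb
  -- the value of c
  have hc_eq : c = (‖μj - νj‖^2 - ‖μj - νi‖^2)/2 := by
    have e1 := norm_sub_sq_real μj νj
    have e2 := norm_sub_sq_real μj νi
    have e3 : ⟪w, μj⟫ = ⟪μj, νj⟫ - ⟪μj, νi⟫ := by
      rw [hw, inner_sub_left, real_inner_comm νj μj, real_inner_comm νi μj]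
    rw [hcdef, e3]; linarith
  have hc_ub : c ≤ -(2/5) * (Cij^2 * σ^2) := by
    rw [hc_eq]
    have hCs : C * σ ≤ Cij * σ := mul_le_mul_of_nonneg_right hCC hσ.le
    have h1 : ‖μj - νj‖^2 ≤ (Cij * σ / 10)^2 := by
      apply pow_le_pow_left₀ (norm_nonneg _) (le_trans hμν (by linarith))
    have h2 : ((9:ℝ)/10) * (Cij * σ) ≤ ‖μj - νi‖ := by linarith
    have h3 : (((9:ℝ)/10) * (Cij * σ))^2 ≤ ‖μj - νi‖^2 :=
      pow_le_pow_left₀ (by positivity) h2 2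
    nlinarith [h1, h3]
  have hc_neg : c ≤ 0 := le_trans hc_ub (by nlinarith)
  -- rewrite the event
  have hset : {ω | ‖(μj + z ω) - νi‖ ≤ ‖(μj + z ω) - νj‖}
      = (fun ω => ⟪w, z ω⟫) ⁻¹' Set.Iic c := by
    ext ω
    simp only [Set.mem_setOf_eq, Set.mem_preimage, Set.mem_Iic]
    set x : EuclideanSpace ℝ (Fin d) := μj + z ω with hx
    rw [← pow_le_pow_iff_left₀ (norm_nonneg _) (norm_nonneg _) two_ne_zero,
      norm_sub_sq_real, norm_sub_sq_real]
    have e1 : ⟪w, x⟫ = ⟪x, νj⟫ - ⟪x, νi⟫ := by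
      rw [hw, inner_sub_left, real_inner_comm νj x, real_inner_comm νi x]
    have e2 : ⟪w, x⟫ = ⟪w, μj⟫ + ⟪w, z ω⟫ := by rw [hx, inner_add_right]
    constructor <;> intro h <;> [skip; skip] <;> rw [hcdef] at * <;> nlinarith [e1, e2]
  -- apply the gaussian law
  have hmap := hz w
  set V : ℝ≥0 := Real.toNNReal (σ^2 * ‖w‖^2) with hV
  have hVpos : (0:ℝ) < σ^2 * ‖w‖^2 := by positivity
  have hVne : V ≠ 0 := by
    simp only [hV, ne_eq, Real.toNNReal_eq_zero, not_le]
    exact hVpos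
  have hVcoe : (V : ℝ) = σ^2 * ‖w‖^2 := Real.coe_toNNReal _ hVpos.le
  have haem : AEMeasurable (fun ω => ⟪w, z ω⟫) P := by
    by_contra h
    rw [Measure.map_of_not_aemeasurable h] at hmap
    have : (gaussianReal 0 V : Measure ℝ) Set.univ = 1 := measure_univ
    rw [← hmap] at this
    simp at this
  have hPeq : P {ω | ‖(μj + z ω) - νi‖ ≤ ‖(μj + z ω) - νj‖}
      = gaussianReal 0 V (Set.Iic c) := by
    rw [hset, ← Measure.map_apply_of_aemeasurable haem measurableSet_Iic, hmap]
  rw [hPeq]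
  refine le_trans (gaussian_tail V hVne c hc_neg) ?_
  rw [Real.exp_le_exp]
  have h2V : (0:ℝ) < 2*(V:ℝ) := by rw [hVcoe]; positivity
  have hgoal : (1/18) * Cij^2 ≤ c^2 / (2*(V:ℝ)) := by
    rw [le_div_iff₀ h2V, hVcoe]
    have hcsq : ((2/5) * (Cij^2 * σ^2))^2 ≤ c^2 := by
      have ht : (0:ℝ) ≤ (2/5) * (Cij^2 * σ^2) := by positivity
      have hct : c + (2/5) * (Cij^2 * σ^2) ≤ 0 := by linarith
      nlinarith [mul_nonneg ht (neg_nonneg.2 hct)]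
    have hwub : ‖w‖ ≤ (6/5)*(Cij*σ) := le_trans hw_ub (by nlinarith)
    have hwsq : ‖w‖^2 ≤ ((6/5) * (Cij*σ))^2 := by nlinarith [norm_nonneg w]
    have hmul : σ^2 * ‖w‖^2 ≤ σ^2 * ((6/5)*(Cij*σ))^2 :=
      mul_le_mul_of_nonneg_left hwsq (sq_nonneg σ)
    nlinarith [sq_nonneg Cij, mul_le_mul_of_nonneg_left hmul (by positivity : (0:ℝ) ≤ (1/9)*Cij^2)]
  have hrw : -c^2/(2*(V:ℝ)) = -(c^2/(2*(V:ℝ))) := by ring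
  rw [hrw]
  linarith
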